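/- Let Σ be a K×K symmetric positive-definite matrix satisfying Σ_{ii} ≥ (2K−3)·|Σ_{ij}| for all i ≠ j (with K ≥ 2). Then the inverse matrix satisfies [Σ⁻¹]_{ii} ≥ (K−1)·|[Σ⁻¹]_{ij}| for all i ≠ j; in particular Σ⁻¹ is diagonally dominant. -/

import Mathlib

open Matrix

theorem stmt_5 {K : ℕ} (hK : 2 ≤ K) (S : Matrix (Fin K) (Fin K) ℝ) (hS : S.PosDef)
    (h : ∀ i j, i ≠ j → (2 * (K : ℝ) - 3) * |S i j| ≤ S i i) :
    (∀ i j, i ≠ j → ((K : ℝ) - 1) * |S⁻¹ i j| ≤ S⁻¹ i i) ∧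
    (∀ i, ∑ j ∈ Finset.univ.erase i, |S⁻¹ i j| ≤ S⁻¹ i i) := by
  have hKR : (2:ℝ) ≤ (K:ℝ) := by exact_mod_cast hK
  have hdet : IsUnit S.det := isUnit_iff_ne_zero.2 hS.det_pos.ne'
  have hPS : S⁻¹ * S = 1 := S.nonsing_inv_mul hdet
  set P := S⁻¹ with hPdef
  have hPinv : P.PosDef := hS.inv
  have diagpos : ∀ (M : Matrix (Fin K) (Fin K) ℝ), M.PosDef → ∀ j, 0 < M j j := by
    intro M hM j
    exact hM.diag_pos
  have hSd : ∀ j, 0 < S j j := diagpos S hS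
  have hPd : ∀ i, 0 < P i i := diagpos P hPinv
  have hsymm : ∀ k j, S k j = S j k := by
    intro k j
    have := hS.1.apply j k
    simpa using this
  -- key inequality
  have key : ∀ i j, i ≠ j →
      (2 * (K:ℝ) - 3) * |P i j| ≤ ∑ k ∈ Finset.univ.erase j, |P i k| := by
    intro i j hij
    have h0 : ∑ k, P i k * S k j = 0 := by
      have := congrFun (congrFun hPS i) j
      rw [Matrix.mul_apply] at this
      simpa [Matrix.one_apply, hij] using this
    have hsp := Finset.add_sum_erase Finset.univ (fun k => P i k * S k j) (Finset.mem_univ j)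
    have heq : P i j * S j j = -∑ k ∈ Finset.univ.erase j, P i k * S k j := by linarith
    have h23 : (0:ℝ) ≤ 2 * (K:ℝ) - 3 := by linarith
    have hchain : (2 * (K:ℝ) - 3) * |P i j| * S j j
        ≤ (∑ k ∈ Finset.univ.erase j, |P i k|) * S j j := by
      calc (2 * (K:ℝ) - 3) * |P i j| * S j j
          = (2 * (K:ℝ) - 3) * |P i j * S j j| := by
            rw [abs_mul, abs_of_pos (hSd j)]; ring
        _ = (2 * (K:ℝ) - 3) * |∑ k ∈ Finset.univ.erase j, P i k * S k j| := by
            rw [heq, abs_neg]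
        _ ≤ (2 * (K:ℝ) - 3) * ∑ k ∈ Finset.univ.erase j, |P i k * S k j| :=
            mul_le_mul_of_nonneg_left (Finset.abs_sum_le_sum_abs _ _) h23
        _ = ∑ k ∈ Finset.univ.erase j, |P i k| * ((2 * (K:ℝ) - 3) * |S k j|) := by
            rw [Finset.mul_sum]
            refine Finset.sum_congr rfl fun k _ => ?_
            rw [abs_mul]; ring
        _ ≤ ∑ k ∈ Finset.univ.erase j, |P i k| * S j j := by
            refine Finset.sum_le_sum fun k hk => ?_
            have hkj : k ≠ j := Finset.ne_of_mem_erase hk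
            have := h j k (hkj.symm)
            rw [hsymm k j]
            exact mul_le_mul_of_nonneg_left this (abs_nonneg _)
        _ = (∑ k ∈ Finset.univ.erase j, |P i k|) * S j j := (Finset.sum_mul _ _ _).symm
    exact le_of_mul_le_mul_right hchain (hSd j)
  -- main per-row bound
  have main : ∀ i : Fin K, (∀ j, j ≠ i → ((K:ℝ) - 1) * |P i j| ≤ P i i) ∧
      (∑ k ∈ Finset.univ.erase i, |P i k| ≤ P i i) := by
    intro i
    have hnt : Nontrivial (Fin K) := Fin.nontrivial_iff_two_le.mpr hK
    obtain ⟨j₁, hj₁⟩ := exists_ne i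
    have hne : (Finset.univ.erase i).Nonempty := ⟨j₁, Finset.mem_erase.2 ⟨hj₁, Finset.mem_univ _⟩⟩
    obtain ⟨j0, hj0mem, hj0max⟩ := Finset.exists_max_image (Finset.univ.erase i) (fun k => |P i k|) hne
    set m := |P i j0| with hm
    have hmnn : 0 ≤ m := abs_nonneg _
    have hj0i : j0 ≠ i := Finset.ne_of_mem_erase hj0mem
    -- card facts
    have hcard1 : ((Finset.univ.erase i).card : ℝ) = (K:ℝ) - 1 := by
      rw [Finset.card_erase_of_mem (Finset.mem_univ i), Finset.card_univ, Fintype.card_fin]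
      rw [Nat.cast_sub (by omega)]
      norm_num
    have hcard2 : (((Finset.univ.erase i).erase j0).card : ℝ) = (K:ℝ) - 2 := by
      rw [Finset.card_erase_of_mem (Finset.mem_erase.2 ⟨hj0i, Finset.mem_univ _⟩),
        Finset.card_erase_of_mem (Finset.mem_univ i), Finset.card_univ, Fintype.card_fin]
      rw [Nat.cast_sub (by omega), Nat.cast_sub (by omega)]
      push_cast
      ring
    set T := ∑ k ∈ (Finset.univ.erase i).erase j0, |P i k| with hT
    have hTm : T ≤ ((K:ℝ) - 2) * m := by
      have := Finset.sum_le_card_nsmul ((Finset.univ.erase i).erase j0) (fun k => |P i k|) m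
        (fun k hk => hj0max k (Finset.mem_of_mem_erase hk))
      rw [nsmul_eq_mul] at this
      calc T ≤ (((Finset.univ.erase i).erase j0).card : ℝ) * m := this
        _ = ((K:ℝ) - 2) * m := by rw [hcard2]
    have hsum_i : ∑ k ∈ Finset.univ.erase i, |P i k| = m + T := by
      have h1 := Finset.add_sum_erase (Finset.univ.erase i) (fun k => |P i k|) hj0mem
      rw [hT, hm]; linarith
    have hsum_j0 : ∑ k ∈ Finset.univ.erase j0, |P i k| = |P i i| + T := by
      have h2 := Finset.add_sum_erase (Finset.univ.erase j0) (fun k => |P i k|)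
        (Finset.mem_erase.2 ⟨fun hc => hj0i hc.symm, Finset.mem_univ i⟩)
      rw [Finset.erase_right_comm] at h2
      rw [hT]; linarith
    have hPiiabs : |P i i| = P i i := abs_of_pos (hPd i)
    have hkey := key i j0 (fun hc => hj0i hc.symm)
    rw [hsum_j0, hPiiabs] at hkey
    -- (2K-3) m ≤ P i i + T ≤ P i i + (K-2) m  ⇒  (K-1) m ≤ P i i
    have hmain : ((K:ℝ) - 1) * m ≤ P i i := by nlinarith
    constructor
    · intro j hj
      have hjm : |P i j| ≤ m := hj0max j (Finset.mem_erase.2 ⟨hj, Finset.mem_univ _⟩)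
      nlinarith
    · rw [hsum_i]; nlinarith
  exact ⟨fun i j hij => (main i).1 j (fun hc => hij hc.symm), fun i => (main i).2⟩
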